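/- The group with presentation ⟨u₂, u₃, u₄, … | u_i = u_{i+1}^{i+1} for all i ≥ 2⟩ (the quotient of the free group on generators u_i, i ≥ 2, by the normal closure of the relators u_i⁻¹·u_{i+1}^{i+1}) is isomorphic to the additive group of rational numbers (ℚ, +). -/

import Mathlib

/-- The generators `u_i`, `i ≥ 2`. -/
abbrev PresAlpha : Type := {i : ℕ // 2 ≤ i}

/-- The relators `u_i⁻¹ · u_{i+1}^{i+1}`, `i ≥ 2`. -/
def presRels : Set (FreeGroup PresAlpha) :=
  {r | ∃ (i : ℕ) (h : 2 ≤ i),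
    r = (FreeGroup.of (⟨i, h⟩ : PresAlpha))⁻¹ *
      (FreeGroup.of (⟨i + 1, by omega⟩ : PresAlpha)) ^ (i + 1)}

noncomputable section

def presF : PresAlpha → Multiplicative ℚ :=
  fun a => Multiplicative.ofAdd ((1 : ℚ) / Nat.factorial a.1)

lemma presF_rel : ∀ r ∈ presRels, (FreeGroup.lift presF) r = 1 := by
  rintro r ⟨i, hi, rfl⟩
  simp only [map_mul, map_inv, map_pow, FreeGroup.lift_apply_of, presF]
  rw [← ofAdd_nsmul, ← ofAdd_neg, ← ofAdd_add, ← ofAdd_zero]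
  congr 1
  have h0 : (Nat.factorial i : ℚ) ≠ 0 := by exact_mod_cast (Nat.factorial_pos i).ne'
  have h2 : (Nat.factorial (i+1) : ℚ) ≠ 0 := by exact_mod_cast (Nat.factorial_pos (i+1)).ne'
  have h1 : (Nat.factorial (i + 1) : ℚ) = (i + 1) * Nat.factorial i := by
    rw [Nat.factorial_succ]; push_cast; ring
  rw [nsmul_eq_mul, h1]
  field_simp
  push_cast
  ring

def presPhi : PresentedGroup presRels →* Multiplicative ℚ := PresentedGroup.toGroup presF_rel

lemma pres_of_eq (i : ℕ) (hi : 2 ≤ i) :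
    (PresentedGroup.of ⟨i, hi⟩ : PresentedGroup presRels) =
      (PresentedGroup.of ⟨i + 1, by omega⟩) ^ (i + 1) := by
  have hmem : (FreeGroup.of (⟨i, hi⟩ : PresAlpha))⁻¹ *
      (FreeGroup.of (⟨i + 1, by omega⟩ : PresAlpha)) ^ (i + 1) ∈
      Subgroup.normalClosure presRels :=
    Subgroup.subset_normalClosure ⟨i, hi, rfl⟩
  have h1 : ((QuotientGroup.mk ((FreeGroup.of (⟨i, hi⟩ : PresAlpha))⁻¹ *
      (FreeGroup.of (⟨i + 1, by omega⟩ : PresAlpha)) ^ (i + 1))) :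
      PresentedGroup presRels) = 1 := (QuotientGroup.eq_one_iff _).2 hmem
  have h2 : (PresentedGroup.of ⟨i, hi⟩ : PresentedGroup presRels)⁻¹ *
      (PresentedGroup.of ⟨i + 1, by omega⟩) ^ (i + 1) = 1 := h1
  have h3 := mul_eq_one_iff_eq_inv.mp h2
  exact inv_injective h3

lemma pres_of_pow (i M : ℕ) (hi : 2 ≤ i) (hle : i ≤ M) :
    (PresentedGroup.of ⟨i, hi⟩ : PresentedGroup presRels) =
      (PresentedGroup.of ⟨M, le_trans hi hle⟩) ^ (Nat.factorial M / Nat.factorial i) := by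
  induction M, hle using Nat.le_induction with
  | base => simp [Nat.div_self (Nat.factorial_pos i)]
  | succ M hM ih =>
      rw [ih, pres_of_eq M (le_trans hi hM), ← pow_mul]
      congr 1
      have hd : Nat.factorial i ∣ Nat.factorial M := Nat.factorial_dvd_factorial hM
      rw [Nat.factorial_succ, Nat.mul_div_assoc _ hd]

end


lemma pres_isPow (x : PresentedGroup presRels) :
    ∃ (M : ℕ) (hM : 2 ≤ M) (n : ℤ), x = (PresentedGroup.of ⟨M, hM⟩) ^ n := by
  induction x using QuotientGroup.induction_on with
  | _ z =>
    induction z using FreeGroup.induction_on with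
    | C1 => exact ⟨2, le_refl 2, 0, by simp; rfl⟩
    | of a => exact ⟨a.1, a.2, 1, by rw [zpow_one]; rfl⟩
    | inv_of a ih =>
        obtain ⟨M, hM, n, h⟩ := ih
        exact ⟨M, hM, -n, by rw [QuotientGroup.mk_inv, h, zpow_neg]; rfl⟩
    | mul x y ihx ihy =>
        obtain ⟨M1, hM1, n1, h1⟩ := ihx
        obtain ⟨M2, hM2, n2, h2⟩ := ihy
        refine ⟨max M1 M2, le_trans hM1 (le_max_left _ _),
          n1 * (Nat.factorial (max M1 M2) / Nat.factorial M1) +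
          n2 * (Nat.factorial (max M1 M2) / Nat.factorial M2), ?_⟩
        rw [QuotientGroup.mk_mul, h1, h2,
          pres_of_pow M1 (max M1 M2) hM1 (le_max_left _ _),
          pres_of_pow M2 (max M1 M2) hM2 (le_max_right _ _)]
        change (_ : PresentedGroup presRels) * _ = _
        rw [← zpow_natCast, ← zpow_natCast, ← zpow_mul, ← zpow_mul, ← zpow_add]
        congr 1
        push_cast [Int.ofNat_tdiv]
        ring

lemma presPhi_of (i : ℕ) (hi : 2 ≤ i) :
    presPhi (PresentedGroup.of ⟨i, hi⟩) = Multiplicative.ofAdd ((1:ℚ) / Nat.factorial i) :=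
  PresentedGroup.toGroup.of presF_rel

lemma presPhi_pow (M : ℕ) (hM : 2 ≤ M) (n : ℤ) :
    presPhi ((PresentedGroup.of ⟨M, hM⟩) ^ n) = Multiplicative.ofAdd ((n : ℚ) / Nat.factorial M) := by
  rw [map_zpow, presPhi_of, ← ofAdd_zsmul]
  congr 1
  rw [zsmul_eq_mul, mul_one_div]

theorem statement18 : Nonempty (PresentedGroup presRels ≃* Multiplicative ℚ) := by
  refine ⟨MulEquiv.ofBijective presPhi ⟨?_, ?_⟩⟩
  · rw [injective_iff_map_eq_one]
    intro x hx
    obtain ⟨M, hM, n, rfl⟩ := pres_isPow x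
    rw [presPhi_pow] at hx
    have h0 : (Nat.factorial M : ℚ) ≠ 0 := by exact_mod_cast (Nat.factorial_pos M).ne'
    have : (n : ℚ) / Nat.factorial M = 0 := by
      have := Multiplicative.ofAdd.injective (hx.trans (ofAdd_zero).symm)
      exact this
    have hn : n = 0 := by
      field_simp at this
      exact_mod_cast this
    rw [hn, zpow_zero]
  · intro q
    set p : ℚ := Multiplicative.toAdd q with hp
    set M : ℕ := max p.den 2 with hMdef
    have hM : 2 ≤ M := le_max_right _ _
    have hden : (p.den : ℤ) ∣ (Nat.factorial M : ℤ) := by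
      exact_mod_cast Nat.dvd_factorial p.pos (le_max_left _ _)
    obtain ⟨c, hc⟩ := hden
    refine ⟨(PresentedGroup.of ⟨M, hM⟩) ^ (p.num * c), ?_⟩
    rw [presPhi_pow]
    have h0 : (p.den : ℚ) ≠ 0 := by exact_mod_cast p.den_nz
    have hf : (Nat.factorial M : ℚ) ≠ 0 := by exact_mod_cast (Nat.factorial_pos M).ne'
    have hcq : ((Nat.factorial M : ℕ) : ℚ) = (p.den : ℚ) * (c : ℚ) := by exact_mod_cast hc
    have hc0 : (c : ℚ) ≠ 0 := by
      intro h
      rw [h, mul_zero] at hcq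
      exact hf hcq
    have key : ((p.num * c : ℤ) : ℚ) / (Nat.factorial M : ℚ) = p := by
      rw [div_eq_iff hf, hcq]
      push_cast
      rw [← mul_assoc, Rat.mul_den_eq_num]
    calc Multiplicative.ofAdd (((p.num * c : ℤ) : ℚ) / (Nat.factorial M : ℚ))
        = Multiplicative.ofAdd p := by rw [key]
      _ = q := rfl
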